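/- Let d ≥ 1, λ ≥ 0, K ≥ 0, and let φ : ℝ^d → ℝ be K-Lipschitz and λ-concave. Then for every ε > 0 and every t > 0 the Cole–Hopf function u^ε_t is λ/(1+λt)-concave, i.e. x ↦ u^ε_t(x) − (λ/(2(1+λt)))‖x‖² is concave on ℝ^d. -/

import Mathlib

open MeasureTheory
noncomputable section

/-- The Cole–Hopf function
`u^ε_t(x) = −ε log( (2πεt)^{−d/2} ∫ exp(−‖x−y‖²/(2εt) − φ(y)/ε) dy )`. -/
def coleHopf {d : ℕ} (φ : EuclideanSpace ℝ (Fin d) → ℝ) (ε t : ℝ)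
    (x : EuclideanSpace ℝ (Fin d)) : ℝ :=
  -ε * Real.log ((2 * Real.pi * ε * t) ^ (-(d : ℝ) / 2) *
    ∫ y : EuclideanSpace ℝ (Fin d),
      Real.exp (-‖x - y‖ ^ 2 / (2 * ε * t) - φ y / ε))

namespace ColeHopfAux

open Real ENNReal
open scoped ENNReal

/-- Gaussian integrability on Euclidean space, real version, centered at `x`. -/
lemma integrable_gauss {d : ℕ} (b : ℝ) (hb : 0 < b) (x : EuclideanSpace ℝ (Fin d)) :
    Integrable (fun y : EuclideanSpace ℝ (Fin d) => Real.exp (-b * ‖y - x‖ ^ 2)) := by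
  have h0 : Integrable (fun v : EuclideanSpace ℝ (Fin d) => Real.exp (-b * ‖v‖ ^ 2)) := by
    have h := (GaussianFourier.integrable_cexp_neg_mul_sq_norm_add_of_euclideanSpace
      (b := (b : ℂ)) (by simpa using hb) 0 (0 : EuclideanSpace ℝ (Fin d))).norm
    refine h.congr ?_
    filter_upwards with v
    simp [Complex.norm_exp, ← Complex.ofReal_pow]
  simpa using h0.comp_sub_right x

lemma integrable_main {d : ℕ} {K : ℝ} {φ : EuclideanSpace ℝ (Fin d) → ℝ}
    (hLip : ∀ y z, |φ y - φ z| ≤ K * ‖y - z‖) (hφc : Continuous φ)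
    {ε t : ℝ} (hε : 0 < ε) (ht : 0 < t) (x : EuclideanSpace ℝ (Fin d)) :
    Integrable (fun y => Real.exp (-‖x - y‖ ^ 2 / (2 * ε * t) - φ y / ε)) := by
  set D : ℝ := K ^ 2 * t / ε - φ x / ε with hD
  have hmeas : AEStronglyMeasurable
      (fun y => Real.exp (-‖x - y‖ ^ 2 / (2 * ε * t) - φ y / ε))
      (volume : Measure (EuclideanSpace ℝ (Fin d))) := by
    refine Continuous.aestronglyMeasurable ?_
    exact Real.continuous_exp.comp (by fun_prop)
  refine Integrable.mono' (((integrable_gauss (1 / (4 * ε * t)) (by positivity) x).const_mul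
      (Real.exp D))) hmeas ?_
  filter_upwards with y
  rw [Real.norm_eq_abs, abs_of_pos (Real.exp_pos _), ← Real.exp_add]
  apply Real.exp_le_exp.2
  have h1 : φ x - φ y ≤ K * ‖y - x‖ := by
    have h := hLip x y
    rw [norm_sub_rev] at h
    linarith [le_abs_self (φ x - φ y)]
  have hxy : ‖x - y‖ = ‖y - x‖ := norm_sub_rev x y
  rw [hxy]
  set u := ‖y - x‖ with hu
  have hu0 : 0 ≤ u := norm_nonneg _
  have h4 : (0:ℝ) < 4 * ε * t := by positivity
  rw [← sub_nonneg]
  have expand : (D + -(1 / (4 * ε * t)) * u ^ 2) - (-u ^ 2 / (2 * ε * t) - φ y / ε)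
      = (4 * K ^ 2 * t ^ 2 - 4 * t * (φ x - φ y) + u ^ 2) / (4 * ε * t) := by
    rw [hD]; field_simp; ring
  rw [expand]
  apply div_nonneg _ h4.le
  nlinarith [mul_le_mul_of_nonneg_left h1 (by linarith : (0:ℝ) ≤ 4 * t),
    sq_nonneg (u - 2 * K * t)]


lemma quad_id {d : ℕ} {lam t : ℝ} (hs : 0 < 1 + lam * t) (ht : 0 < t)
    (x y : EuclideanSpace ℝ (Fin d)) :
    lam / (2 * (1 + lam * t)) * ‖x‖ ^ 2 - ‖x - y‖ ^ 2 / (2 * t) - lam / 2 * ‖y‖ ^ 2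
      = -‖x - (1 + lam * t) • y‖ ^ 2 / (2 * t * (1 + lam * t)) := by
  have h1 := norm_sub_sq_real x y
  have h2 : ‖x - (1 + lam * t) • y‖ ^ 2
      = ‖x‖ ^ 2 - 2 * ((1 + lam * t) * inner ℝ x y) + (1 + lam * t) ^ 2 * ‖y‖ ^ 2 := by
    rw [norm_sub_sq_real, real_inner_smul_right, norm_smul, Real.norm_eq_abs, abs_of_pos hs]
    ring
  rw [h1, h2]
  field_simp
  ring

/-- The basic kernel. -/
def Fk {d : ℕ} (φ : EuclideanSpace ℝ (Fin d) → ℝ) (lam ε t : ℝ)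
    (x z : EuclideanSpace ℝ (Fin d)) : ℝ :=
  Real.exp ((lam / (2 * (1 + lam * t)) * ‖x‖ ^ 2 - ‖x - z‖ ^ 2 / (2 * t) - φ z) / ε)

lemma Fk_nonneg {d : ℕ} (φ : EuclideanSpace ℝ (Fin d) → ℝ) (lam ε t : ℝ)
    (x z : EuclideanSpace ℝ (Fin d)) : 0 ≤ Fk φ lam ε t x z := (Real.exp_pos _).le

lemma Fk_eq {d : ℕ} (φ : EuclideanSpace ℝ (Fin d) → ℝ) {lam ε t : ℝ}
    (hε : 0 < ε) (ht : 0 < t) (x z : EuclideanSpace ℝ (Fin d)) :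
    Fk φ lam ε t x z = Real.exp (lam / (2 * (1 + lam * t)) * ‖x‖ ^ 2 / ε) *
      Real.exp (-‖x - z‖ ^ 2 / (2 * ε * t) - φ z / ε) := by
  rw [Fk, ← Real.exp_add]
  congr 1
  generalize lam / (2 * (1 + lam * t)) = c
  field_simp
  ring

lemma Fk_continuous {d : ℕ} {φ : EuclideanSpace ℝ (Fin d) → ℝ} (hφc : Continuous φ)
    (lam ε t : ℝ) (x : EuclideanSpace ℝ (Fin d)) :
    Continuous (fun z => Fk φ lam ε t x z) := by
  unfold Fk
  exact Real.continuous_exp.comp (by fun_prop)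

lemma Fk_integrable {d : ℕ} {K : ℝ} {φ : EuclideanSpace ℝ (Fin d) → ℝ}
    (hLip : ∀ y z, |φ y - φ z| ≤ K * ‖y - z‖) (hφc : Continuous φ)
    {lam ε t : ℝ} (hε : 0 < ε) (ht : 0 < t) (x : EuclideanSpace ℝ (Fin d)) :
    Integrable (fun z => Fk φ lam ε t x z) := by
  simp_rw [Fk_eq φ hε ht x]
  exact (integrable_main hLip hφc hε ht x).const_mul _

lemma Fk_integral_pos {d : ℕ} {K : ℝ} {φ : EuclideanSpace ℝ (Fin d) → ℝ}
    (hLip : ∀ y z, |φ y - φ z| ≤ K * ‖y - z‖) (hφc : Continuous φ)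
    {lam ε t : ℝ} (hε : 0 < ε) (ht : 0 < t) (x : EuclideanSpace ℝ (Fin d)) :
    0 < ∫ z, Fk φ lam ε t x z := by
  have := Fk_integrable hLip hφc (lam := lam) hε ht x
  unfold Fk at this ⊢
  exact integral_exp_pos this

lemma Fk_exp_form {d : ℕ} (φ : EuclideanSpace ℝ (Fin d) → ℝ) {lam ε t : ℝ}
    (hs : 0 < 1 + lam * t) (ht : 0 < t) (x z : EuclideanSpace ℝ (Fin d)) :
    Fk φ lam ε t x z = Real.exp ((-‖x - (1 + lam * t) • z‖ ^ 2 / (2 * t * (1 + lam * t))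
      - (φ z - lam / 2 * ‖z‖ ^ 2)) / ε) := by
  rw [Fk]
  congr 2
  rw [← quad_id hs ht x z]
  ring

/-- Hölder step: the integral of a function dominated pointwise by a product of shifted
powers is dominated by the product of powers of integrals. -/
lemma holder_step {d : ℕ} {F₀ F₁ Fθ : EuclideanSpace ℝ (Fin d) → ℝ}
    (h₀ : Integrable F₀) (h₁ : Integrable F₁) (hθ : Integrable Fθ)
    (hc₀ : Continuous F₀) (hc₁ : Continuous F₁)
    (h₀n : ∀ y, 0 ≤ F₀ y) (h₁n : ∀ y, 0 ≤ F₁ y) (hθn : ∀ y, 0 ≤ Fθ y)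
    {a b : ℝ} (ha : 0 < a) (hb : 0 < b) (hab : a + b = 1)
    (w₀ w₁ : EuclideanSpace ℝ (Fin d))
    (hpt : ∀ y, Fθ y ≤ F₀ (y + w₀) ^ a * F₁ (y + w₁) ^ b) :
    ∫ y, Fθ y ≤ (∫ y, F₀ y) ^ a * (∫ y, F₁ y) ^ b := by
  have ha1 : a < 1 := by linarith
  have hpq : (1 / a).HolderConjugate (1 / b) :=
    ⟨by rw [one_div, one_div, inv_inv, inv_inv, inv_one]; exact hab, one_div_pos.2 ha, one_div_pos.2 hb⟩
  set μ : Measure (EuclideanSpace ℝ (Fin d)) := volume with hμ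
  set L₀ : ℝ≥0∞ := ∫⁻ y, ENNReal.ofReal (F₀ y) ∂μ with hL₀def
  set L₁ : ℝ≥0∞ := ∫⁻ y, ENNReal.ofReal (F₁ y) ∂μ with hL₁def
  set Lθ : ℝ≥0∞ := ∫⁻ y, ENNReal.ofReal (Fθ y) ∂μ with hLθdef
  have hL₀ : L₀ ≠ ⊤ := h₀.lintegral_lt_top.ne
  have hL₁ : L₁ ≠ ⊤ := h₁.lintegral_lt_top.ne
  have hI₀ : ∫ y, F₀ y ∂μ = L₀.toReal :=
    integral_eq_lintegral_of_nonneg_ae (Filter.Eventually.of_forall h₀n) h₀.aestronglyMeasurable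
  have hI₁ : ∫ y, F₁ y ∂μ = L₁.toReal :=
    integral_eq_lintegral_of_nonneg_ae (Filter.Eventually.of_forall h₁n) h₁.aestronglyMeasurable
  have hIθ : ∫ y, Fθ y ∂μ = Lθ.toReal :=
    integral_eq_lintegral_of_nonneg_ae (Filter.Eventually.of_forall hθn) hθ.aestronglyMeasurable
  have m₀ : Measurable (fun y : EuclideanSpace ℝ (Fin d) =>
      ENNReal.ofReal (F₀ (y + w₀)) ^ a) := by
    exact ENNReal.continuous_rpow_const.measurable.comp
      (ENNReal.measurable_ofReal.comp (hc₀.comp (continuous_id.add continuous_const)).measurable)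
  have m₁ : Measurable (fun y : EuclideanSpace ℝ (Fin d) =>
      ENNReal.ofReal (F₁ (y + w₁)) ^ b) := by
    exact ENNReal.continuous_rpow_const.measurable.comp
      (ENNReal.measurable_ofReal.comp (hc₁.comp (continuous_id.add continuous_const)).measurable)
  have key : Lθ ≤ L₀ ^ a * L₁ ^ b := by
    have step1 : Lθ ≤ ∫⁻ y, (ENNReal.ofReal (F₀ (y + w₀)) ^ a)
        * (ENNReal.ofReal (F₁ (y + w₁)) ^ b) ∂μ := by
      refine lintegral_mono fun y => ?_
      calc ENNReal.ofReal (Fθ y)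
          ≤ ENNReal.ofReal (F₀ (y + w₀) ^ a * F₁ (y + w₁) ^ b) :=
            ENNReal.ofReal_le_ofReal (hpt y)
        _ = _ := by
            rw [ENNReal.ofReal_mul (Real.rpow_nonneg (h₀n _) _),
              ENNReal.ofReal_rpow_of_nonneg (h₀n _) ha.le,
              ENNReal.ofReal_rpow_of_nonneg (h₁n _) hb.le]
    have step2 := ENNReal.lintegral_mul_le_Lp_mul_Lq μ hpq m₀.aemeasurable m₁.aemeasurable
    simp only [Pi.mul_apply] at step2
    have e₀ : ∀ y : EuclideanSpace ℝ (Fin d),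
        (ENNReal.ofReal (F₀ (y + w₀)) ^ a) ^ (1 / a) = ENNReal.ofReal (F₀ (y + w₀)) := by
      intro y
      rw [← ENNReal.rpow_mul, mul_one_div_cancel ha.ne', ENNReal.rpow_one]
    have e₁ : ∀ y : EuclideanSpace ℝ (Fin d),
        (ENNReal.ofReal (F₁ (y + w₁)) ^ b) ^ (1 / b) = ENNReal.ofReal (F₁ (y + w₁)) := by
      intro y
      rw [← ENNReal.rpow_mul, mul_one_div_cancel hb.ne', ENNReal.rpow_one]
    simp only [e₀, e₁, one_div_one_div] at step2
    have tr₀ : ∫⁻ y, ENNReal.ofReal (F₀ (y + w₀)) ∂μ = L₀ :=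
      lintegral_add_right_eq_self (fun y => ENNReal.ofReal (F₀ y)) w₀
    have tr₁ : ∫⁻ y, ENNReal.ofReal (F₁ (y + w₁)) ∂μ = L₁ :=
      lintegral_add_right_eq_self (fun y => ENNReal.ofReal (F₁ y)) w₁
    rw [tr₀, tr₁] at step2
    exact le_trans step1 step2
  rw [hI₀, hI₁, hIθ]
  have hne : L₀ ^ a * L₁ ^ b ≠ ⊤ := by
    exact ENNReal.mul_ne_top (ENNReal.rpow_ne_top_of_nonneg ha.le hL₀)
      (ENNReal.rpow_ne_top_of_nonneg hb.le hL₁)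
  calc Lθ.toReal ≤ (L₀ ^ a * L₁ ^ b).toReal := ENNReal.toReal_mono hne key
    _ = L₀.toReal ^ a * L₁.toReal ^ b := by
        rw [ENNReal.toReal_mul, ENNReal.toReal_rpow, ENNReal.toReal_rpow]

lemma key_pointwise {d : ℕ} {lam ε t : ℝ} {φ : EuclideanSpace ℝ (Fin d) → ℝ}
    (hConc : ConcaveOn ℝ Set.univ (fun y => φ y - lam / 2 * ‖y‖ ^ 2))
    (hs : 0 < 1 + lam * t) (hε : 0 < ε) (ht : 0 < t)
    {a b : ℝ} (ha : 0 < a) (hb : 0 < b) (hab : a + b = 1)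
    (x₀ x₁ y : EuclideanSpace ℝ (Fin d)) :
    Fk φ lam ε t (a • x₀ + b • x₁) y ≤
      Fk φ lam ε t x₀ (y + (b / (1 + lam * t)) • (x₀ - x₁)) ^ a *
      Fk φ lam ε t x₁ (y + (-(a / (1 + lam * t))) • (x₀ - x₁)) ^ b := by
  set s : ℝ := 1 + lam * t with hsdef
  set v : EuclideanSpace ℝ (Fin d) := x₀ - x₁ with hv
  set y₀ : EuclideanSpace ℝ (Fin d) := y + (b / s) • v with hy₀
  set y₁ : EuclideanSpace ℝ (Fin d) := y + (-(a / s)) • v with hy₁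
  have hb1 : a = 1 - b := by linarith
  have hsb : s • ((b / s) • v) = b • v := by
    rw [smul_smul, mul_div_cancel₀ _ hs.ne']
  have hsa : s • ((-(a / s)) • v) = (-a) • v := by
    rw [smul_smul, mul_neg, mul_div_cancel₀ _ hs.ne', neg_smul]
  have hid₀ : x₀ - s • y₀ = (a • x₀ + b • x₁) - s • y := by
    rw [hy₀, smul_add, hsb, hv, hb1]
    module
  have hid₁ : x₁ - s • y₁ = (a • x₀ + b • x₁) - s • y := by
    rw [hy₁, smul_add, hsa, hv, hb1]
    module
  have hidy : a • y₀ + b • y₁ = y := by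
    rw [hy₀, hy₁, smul_add, smul_add, smul_smul, smul_smul]
    have h1 : a * (b / s) + b * (-(a / s)) = 0 := by ring
    have h2 : a • y + b • y = y := by
      rw [← add_smul, hab, one_smul]
    calc a • y + (a * (b / s)) • v + (b • y + (b * (-(a / s))) • v)
        = (a • y + b • y) + (a * (b / s) + b * (-(a / s))) • v := by
          rw [add_smul]; abel
      _ = y := by rw [h1, zero_smul, add_zero, h2]
  have hgc : a * (φ y₀ - lam / 2 * ‖y₀‖ ^ 2) + b * (φ y₁ - lam / 2 * ‖y₁‖ ^ 2)
      ≤ φ y - lam / 2 * ‖y‖ ^ 2 := by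
    have h := hConc.2 (Set.mem_univ y₀) (Set.mem_univ y₁) ha.le hb.le hab
    rw [hidy] at h
    simpa [smul_eq_mul] using h
  rw [Fk_exp_form φ hs ht (a • x₀ + b • x₁) y, Fk_exp_form φ hs ht x₀ y₀,
    Fk_exp_form φ hs ht x₁ y₁, hid₀, hid₁, ← Real.exp_mul, ← Real.exp_mul, ← Real.exp_add]
  apply Real.exp_le_exp.2
  simp only [← hsdef]
  have harith : ∀ (W u u0 u1 : ℝ), a * u0 + b * u1 ≤ u →
      (W - u) / ε ≤ (W - u0) / ε * a + (W - u1) / ε * b := by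
    intro W u u0 u1 h
    have e1 : (W - u0) / ε * a + (W - u1) / ε * b = (W * (a + b) - (a * u0 + b * u1)) / ε := by
      ring
    rw [e1, hab, mul_one]
    gcongr
  exact harith _ _ _ _ (by linarith [hgc])

end ColeHopfAux

theorem stmt1 (d : ℕ) (hd : 1 ≤ d) (lam K : ℝ) (hlam : 0 ≤ lam) (hK : 0 ≤ K)
    (φ : EuclideanSpace ℝ (Fin d) → ℝ)
    (hLip : ∀ y z, |φ y - φ z| ≤ K * ‖y - z‖)
    (hConc : ConcaveOn ℝ Set.univ (fun y => φ y - lam / 2 * ‖y‖ ^ 2))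
    (ε : ℝ) (hε : 0 < ε) (t : ℝ) (ht : 0 < t) :
    ConcaveOn ℝ Set.univ
      (fun x => coleHopf φ ε t x - lam / (2 * (1 + lam * t)) * ‖x‖ ^ 2) := by
  have hs : 0 < 1 + lam * t := by nlinarith [mul_nonneg hlam ht.le]
  have hφc : Continuous φ := by
    have h : LipschitzWith (Real.toNNReal K) φ :=
      LipschitzWith.of_dist_le' fun y z => by
        rw [Real.dist_eq, dist_eq_norm]; exact hLip y z
    exact h.continuous
  have hGpos : ∀ x, 0 < ∫ y, ColeHopfAux.Fk φ lam ε t x y :=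
    fun x => ColeHopfAux.Fk_integral_pos hLip hφc hε ht x
  have hGconv : ConvexOn ℝ Set.univ
      (fun x => Real.log (∫ y, ColeHopfAux.Fk φ lam ε t x y)) := by
    apply convexOn_iff_forall_pos.2 ⟨convex_univ, ?_⟩
    intro x₀ _ x₁ _ a b ha hb hab
    have hIle : (∫ y, ColeHopfAux.Fk φ lam ε t (a • x₀ + b • x₁) y)
        ≤ (∫ y, ColeHopfAux.Fk φ lam ε t x₀ y) ^ a *
          (∫ y, ColeHopfAux.Fk φ lam ε t x₁ y) ^ b := by
      refine ColeHopfAux.holder_step (ColeHopfAux.Fk_integrable hLip hφc hε ht x₀)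
        (ColeHopfAux.Fk_integrable hLip hφc hε ht x₁)
        (ColeHopfAux.Fk_integrable hLip hφc hε ht (a • x₀ + b • x₁))
        (ColeHopfAux.Fk_continuous hφc lam ε t x₀)
        (ColeHopfAux.Fk_continuous hφc lam ε t x₁)
        (ColeHopfAux.Fk_nonneg φ lam ε t x₀) (ColeHopfAux.Fk_nonneg φ lam ε t x₁)
        (ColeHopfAux.Fk_nonneg φ lam ε t _) ha hb hab
        ((b / (1 + lam * t)) • (x₀ - x₁)) ((-(a / (1 + lam * t))) • (x₀ - x₁))
        (fun y => ColeHopfAux.key_pointwise hConc hs hε ht ha hb hab x₀ x₁ y)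
    have h0 := hGpos x₀
    have h1 := hGpos x₁
    calc Real.log (∫ y, ColeHopfAux.Fk φ lam ε t (a • x₀ + b • x₁) y)
        ≤ Real.log ((∫ y, ColeHopfAux.Fk φ lam ε t x₀ y) ^ a *
            (∫ y, ColeHopfAux.Fk φ lam ε t x₁ y) ^ b) := Real.log_le_log (hGpos _) hIle
      _ = a * Real.log (∫ y, ColeHopfAux.Fk φ lam ε t x₀ y)
          + b * Real.log (∫ y, ColeHopfAux.Fk φ lam ε t x₁ y) := by
          rw [Real.log_mul (Real.rpow_pos_of_pos h0 a).ne' (Real.rpow_pos_of_pos h1 b).ne',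
            Real.log_rpow h0, Real.log_rpow h1]
      _ = a • Real.log (∫ y, ColeHopfAux.Fk φ lam ε t x₀ y)
          + b • Real.log (∫ y, ColeHopfAux.Fk φ lam ε t x₁ y) := by
          simp [smul_eq_mul]
  have hfun : (fun x => coleHopf φ ε t x - lam / (2 * (1 + lam * t)) * ‖x‖ ^ 2)
      = fun x => (-ε * Real.log ((2 * Real.pi * ε * t) ^ (-(d : ℝ) / 2))) +
          ε • (-(Real.log (∫ y, ColeHopfAux.Fk φ lam ε t x y))) := by
    funext x
    have hI : 0 < ∫ y, Real.exp (-‖x - y‖ ^ 2 / (2 * ε * t) - φ y / ε) := by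
      exact integral_exp_pos (ColeHopfAux.integrable_main hLip hφc hε ht x)
    have hZ : (0:ℝ) < (2 * Real.pi * ε * t) ^ (-(d : ℝ) / 2) :=
      Real.rpow_pos_of_pos (by positivity) _
    have hFk : (∫ y, ColeHopfAux.Fk φ lam ε t x y)
        = Real.exp (lam / (2 * (1 + lam * t)) * ‖x‖ ^ 2 / ε) *
          ∫ y, Real.exp (-‖x - y‖ ^ 2 / (2 * ε * t) - φ y / ε) := by
      simp_rw [ColeHopfAux.Fk_eq φ hε ht x]
      rw [integral_const_mul]
    rw [coleHopf, hFk, Real.log_mul hZ.ne' hI.ne', Real.log_mul (Real.exp_ne_zero _) hI.ne',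
      Real.log_exp, smul_eq_mul]
    field_simp
    ring
  rw [hfun]
  exact (concaveOn_const _ convex_univ).add (hGconv.neg.smul hε.le)
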